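/- arXiv:2002.01413 — 2 statements merged into one kernel-verified Lean document; each statement's English description precedes it below -/
import Mathlib

section
/- Let Y be a real reflexive Banach space, X a nonempty set, and Φ : X × Y → ℝ a function such that for each x ∈ X the functional Φ(x,·) : Y → ℝ is sequentially weakly upper semicontinuous, and such that for some x₀ ∈ X the functional −Φ(x₀,·) is coercive (i.e. lim_{‖y‖→+∞} Φ(x₀,y) = −∞). Then the functional y ↦ inf_{x ∈ X} Φ(x,y) attains its supremum over Y; that is, there exists y* ∈ Y such that inf_{x ∈ X} Φ(x,y) ≤ inf_{x ∈ X} Φ(x,y*) for every y ∈ Y. -/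
open Filter Topology

section Aux

open Filter Topology NormedSpace TopologicalSpace Set Function

variable {E : Type*} [NormedAddCommGroup E] [NormedSpace ℝ E]

lemma aux_sep (p : Submodule ℝ E) (hp : IsClosed (p : Set E)) {x : E} (hx : x ∉ p) :
    ∃ f : E →L[ℝ] ℝ, (∀ y ∈ p, f y = 0) ∧ f x ≠ 0 := by
  obtain ⟨f, u, hfp, hfx⟩ := geometric_hahn_banach_closed_point (p.convex) hp hx
  refine ⟨f, fun y hy => ?_, ?_⟩
  · by_contra h
    have := hfp ((u / f y) • y) (p.smul_mem _ hy)
    rw [map_smul] at this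
    simp only [smul_eq_mul] at this
    rw [div_mul_cancel₀ _ h] at this
    exact lt_irrefl _ this
  · have h0 : f 0 < u := hfp 0 p.zero_mem
    rw [map_zero] at h0
    exact ne_of_gt (h0.trans hfx)

/-- If the dual of a real normed space is separable, so is the space. -/
lemma aux_sep_of_dual_sep (h : SeparableSpace (E →L[ℝ] ℝ)) : SeparableSpace E := by
  have : Nonempty (E →L[ℝ] ℝ) := ⟨0⟩
  obtain ⟨g, hg⟩ := exists_dense_seq (E →L[ℝ] ℝ)
  have hw : ∀ n : ℕ, ∃ w : E, ‖w‖ ≤ 1 ∧ ‖g n‖ / 2 ≤ |(g n) w| := by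
    intro n
    rcases eq_or_lt_of_le (norm_nonneg (g n)) with h0 | h0
    · exact ⟨0, by simp, by simp [← h0]⟩
    · obtain ⟨w, hw1, hw2⟩ := (g n).exists_lt_apply_of_lt_opNorm (r := ‖g n‖ / 2) (by linarith)
      exact ⟨w, hw1.le, by simpa [Real.norm_eq_abs] using hw2.le⟩
  choose w hw1 hw2 using hw
  have hdense : Dense ((Submodule.span ℝ (Set.range w) : Submodule ℝ E) : Set E) := by
    rw [dense_iff_closure_eq, ← Set.univ_subset_iff]
    intro x _
    by_contra hx
    have hx' : x ∉ (Submodule.span ℝ (Set.range w)).topologicalClosure := by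
      rwa [← SetLike.mem_coe, Submodule.topologicalClosure_coe]
    obtain ⟨f, hf0, hfx⟩ := aux_sep _ (Submodule.isClosed_topologicalClosure _) hx'
    have hfw : ∀ n, f (w n) = 0 := fun n =>
      hf0 _ (Submodule.le_topologicalClosure _ (Submodule.subset_span ⟨n, rfl⟩))
    have hfne : f ≠ 0 := fun hf => hfx (by simp [hf])
    set f' : E →L[ℝ] ℝ := ‖f‖⁻¹ • f with hf'
    have hnf : ‖f'‖ = 1 := by
      rw [hf']
      have := norm_smul (‖f‖⁻¹) f
      rw [this, norm_inv, norm_norm, inv_mul_cancel₀ (norm_ne_zero_iff.2 hfne)]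
    obtain ⟨n, hn⟩ := Metric.denseRange_iff.1 hg f' (1/3) (by norm_num)
    rw [dist_comm, dist_eq_norm] at hn
    have hgn : 2/3 ≤ ‖g n‖ := by
      have := norm_sub_norm_le (g n) f'
      rw [hnf] at this
      have : ‖g n‖ ≥ 1 - 1/3 := by
        have h2 := norm_sub_norm_le f' (g n)
        rw [hnf, norm_sub_rev] at h2
        linarith [hn.le]
      linarith
    have hfw' : f' (w n) = 0 := by simp [hf', hfw n]
    have hb : |(g n) (w n)| < 1/3 := by
      have heq : (g n) (w n) = (g n - f') (w n) := by simp [hfw']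
      rw [heq]
      calc |(g n - f') (w n)| ≤ ‖g n - f'‖ * ‖w n‖ := (g n - f').le_opNorm (w n)
        _ ≤ ‖g n - f'‖ := mul_le_of_le_one_right (norm_nonneg _) (hw1 n)
        _ < 1/3 := hn
    have := hw2 n
    linarith
  have hsep : IsSeparable (Submodule.span ℝ (Set.range w) : Set E) :=
    (Set.countable_range w).isSeparable.span
  have : IsSeparable (univ : Set E) := by
    rw [← hdense.closure_eq]
    exact hsep.closure
  exact isSeparable_univ_iff.1 this

/-- A closed subspace of a reflexive space is reflexive. -/
lemma aux_subspace_reflexive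
    (hE : Surjective ((inclusionInDoubleDual ℝ E) : E → StrongDual ℝ (StrongDual ℝ E)))
    (p : Submodule ℝ E) (hp : IsClosed (p : Set E)) :
    Surjective ((inclusionInDoubleDual ℝ p) : p → StrongDual ℝ (StrongDual ℝ p)) := by
  intro ψ
  -- restriction map Dual E → Dual p
  let R : StrongDual ℝ E →L[ℝ] StrongDual ℝ p := (ContinuousLinearMap.compL ℝ p E ℝ).flip p.subtypeL
  have hR : ∀ (g : StrongDual ℝ E) (z : p), R g z = g z := fun g z => rfl
  obtain ⟨y, hy⟩ := hE (ψ.comp R)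
  have hyp : y ∈ p := by
    by_contra hyn
    obtain ⟨f, hf0, hfx⟩ := aux_sep p hp hyn
    have h1 : inclusionInDoubleDual ℝ E y f = ψ (R f) := by
      rw [hy]; rfl
    have h2 : R f = 0 := by
      ext z
      exact hf0 z z.2
    rw [h2, map_zero] at h1
    exact hfx (by simpa [NormedSpace.dual_def] using h1)
  refine ⟨⟨y, hyp⟩, ?_⟩
  ext f
  obtain ⟨g, hg1, _⟩ := exists_extension_norm_eq p f
  have h3 : R g = f := by
    ext z
    exact hg1 z
  have h4 : inclusionInDoubleDual ℝ E y g = ψ (R g) := by rw [hy]; rfl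
  calc (inclusionInDoubleDual ℝ p ⟨y, hyp⟩) f = f ⟨y, hyp⟩ := rfl
    _ = g y := (hg1 ⟨y, hyp⟩).symm
    _ = ψ (R g) := h4
    _ = ψ f := by rw [h3]

/-- Bounded sequences in a reflexive space admit weakly convergent subsequences. -/
lemma aux_weak_seq_compact {Y : Type*} [NormedAddCommGroup Y] [NormedSpace ℝ Y]
    (hYrefl : Surjective ((inclusionInDoubleDual ℝ Y) : Y → StrongDual ℝ (StrongDual ℝ Y)))
    (u : ℕ → Y) (R : ℝ) (hR : 0 ≤ R) (hu : ∀ n, ‖u n‖ ≤ R) :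
    ∃ (z : Y) (φ : ℕ → ℕ), StrictMono φ ∧
      ∀ f : Y →L[ℝ] ℝ, Tendsto (fun j => f (u (φ j))) atTop (𝓝 (f z)) := by
  set Z : Submodule ℝ Y := (Submodule.span ℝ (Set.range u)).topologicalClosure with hZ
  have hZc : IsClosed (Z : Set Y) := Submodule.isClosed_topologicalClosure _
  have hmem : ∀ n, u n ∈ Z :=
    fun n => Submodule.le_topologicalClosure _ (Submodule.subset_span ⟨n, rfl⟩)
  set v : ℕ → Z := fun n => ⟨u n, hmem n⟩ with hv
  have hvnorm : ∀ n, ‖v n‖ ≤ R := fun n => hu n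
  -- Z is separable
  have hZsep : SeparableSpace Z := by
    have h1 : IsSeparable (Z : Set Y) := by
      have := ((Set.countable_range u).isSeparable.span (R := ℝ)).closure
      simpa [hZ, Submodule.topologicalClosure_coe] using this
    exact h1.separableSpace
  -- Z is reflexive
  have hZrefl : Surjective ((inclusionInDoubleDual ℝ Z) : Z → StrongDual ℝ (StrongDual ℝ Z)) :=
    aux_subspace_reflexive hYrefl Z hZc
  -- Dual Z is separable
  have hZddsep : SeparableSpace (StrongDual ℝ (StrongDual ℝ Z)) :=
    hZrefl.denseRange.separableSpace (inclusionInDoubleDual ℝ Z).continuous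
  have hZdsep : SeparableSpace (StrongDual ℝ Z) := by
    exact aux_sep_of_dual_sep (E := StrongDual ℝ Z) hZddsep
  have : Nonempty (StrongDual ℝ Z) := ⟨0⟩
  obtain ⟨g, hg⟩ := exists_dense_seq (StrongDual ℝ Z)
  -- diagonal extraction via compactness of a product of intervals
  set S : Set (ℕ → ℝ) := Set.pi Set.univ fun k => Icc (-(‖g k‖ * R)) (‖g k‖ * R) with hS
  have hScomp : IsCompact S := isCompact_univ_pi fun k => isCompact_Icc
  have hTS : ∀ n, (fun k => g k (v n)) ∈ S := by
    intro n k _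
    have h1 : |(g k) (v n)| ≤ ‖g k‖ * R := by
      calc |(g k) (v n)| ≤ ‖g k‖ * ‖v n‖ := (g k).le_opNorm (v n)
        _ ≤ ‖g k‖ * R := by
            exact mul_le_mul_of_nonneg_left (hvnorm n) (g k).opNorm_nonneg
    exact abs_le.1 h1
  obtain ⟨hinf, -, φ, hφ, hconv⟩ := hScomp.isSeqCompact hTS
  have hcomp : ∀ k, Tendsto (fun j => g k (v (φ j))) atTop (𝓝 (hinf k)) := by
    intro k
    have := tendsto_pi_nhds.1 hconv k
    exact this
  -- every functional converges along the subsequence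
  have hex : ∀ f : StrongDual ℝ Z, ∃ c : ℝ, Tendsto (fun j => f (v (φ j))) atTop (𝓝 c) := by
    intro f
    have hcauchy : CauchySeq (fun j => f (v (φ j))) := by
      rw [Metric.cauchySeq_iff]
      intro ε hε
      obtain ⟨k, hk⟩ := Metric.denseRange_iff.1 hg f (ε / (3 * (R + 1))) (by positivity)
      replace hk : ‖f - g k‖ < ε / (3 * (R + 1)) := (dist_eq_norm f (g k)) ▸ hk
      have hck : CauchySeq (fun j => g k (v (φ j))) := (hcomp k).cauchySeq
      obtain ⟨N, hN⟩ := Metric.cauchySeq_iff.1 hck (ε / 3) (by linarith)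
      refine ⟨N, fun m hm n hn => ?_⟩
      have hgk : ∀ j, |f (v (φ j)) - (g k) (v (φ j))| ≤ ε / 3 := by
        intro j
        have : f (v (φ j)) - g k (v (φ j)) = (f - g k) (v (φ j)) := by simp
        rw [this]
        calc |(f - g k) (v (φ j))| ≤ ‖f - g k‖ * ‖v (φ j)‖ := (f - g k).le_opNorm _
          _ ≤ (ε / (3 * (R + 1))) * R := by
              have hk' : ‖f - g k‖ ≤ ε / (3 * (R + 1)) := by
                exact hk.le
              apply mul_le_mul hk' (hvnorm _) (norm_nonneg _)
              positivity
          _ ≤ ε / 3 := by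
              rw [div_mul_eq_mul_div, div_le_div_iff₀ (by positivity) (by norm_num)]
              nlinarith
      have h2 := hN m hm n hn
      rw [Real.dist_eq] at h2 ⊢
      have e1 := hgk m
      have e2 := hgk n
      have : f (v (φ m)) - f (v (φ n)) =
          (f (v (φ m)) - (g k) (v (φ m))) + ((g k) (v (φ m)) - (g k) (v (φ n)))
          + ((g k) (v (φ n)) - f (v (φ n))) := by ring
      rw [this]
      calc |_| ≤ |f (v (φ m)) - (g k) (v (φ m))| + |(g k) (v (φ m)) - (g k) (v (φ n))|
            + |(g k) (v (φ n)) - f (v (φ n))| := abs_add_three _ _ _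
        _ < ε / 3 + ε / 3 + ε / 3 := by
            have e2' : |(g k) (v (φ n)) - f (v (φ n))| ≤ ε / 3 := by rwa [abs_sub_comm]
            -- need strict somewhere: h2 strict
            exact add_lt_add_of_lt_of_le (add_lt_add_of_le_of_lt e1 h2) e2'
        _ = ε := by ring
    exact cauchySeq_tendsto_of_complete hcauchy
  choose l hl using hex
  -- the limit functional
  have hladd : ∀ f f' : StrongDual ℝ Z, l (f + f') = l f + l f' := by
    intro f f'
    refine tendsto_nhds_unique (hl (f + f')) ?_
    have := (hl f).add (hl f')
    simpa using this
  have hlsmul : ∀ (c : ℝ) (f : StrongDual ℝ Z), l (c • f) = c • l f := by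
    intro c f
    refine tendsto_nhds_unique (hl (c • f)) ?_
    have := (hl f).const_mul c
    simpa [smul_eq_mul] using this
  have hlbound : ∀ f : StrongDual ℝ Z, ‖l f‖ ≤ R * ‖f‖ := by
    intro f
    have h1 : Tendsto (fun j => |f (v (φ j))|) atTop (𝓝 |l f|) := (hl f).abs
    have h2 : ∀ j, |f (v (φ j))| ≤ R * ‖f‖ := by
      intro j
      calc |f (v (φ j))| ≤ ‖f‖ * ‖v (φ j)‖ := f.le_opNorm _
        _ ≤ ‖f‖ * R := mul_le_mul_of_nonneg_left (hvnorm _) f.opNorm_nonneg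
        _ = R * ‖f‖ := mul_comm _ _
    exact le_of_tendsto h1 (Eventually.of_forall h2)
  set ψ : StrongDual ℝ (StrongDual ℝ Z) :=
    LinearMap.mkContinuous
      { toFun := l, map_add' := hladd, map_smul' := hlsmul } R hlbound with hψ
  obtain ⟨z, hz⟩ := hZrefl ψ
  have hzf : ∀ f : StrongDual ℝ Z, Tendsto (fun j => f (v (φ j))) atTop (𝓝 (f z)) := by
    intro f
    have : f z = l f := by
      have := congrArg (fun T => T f) hz
      simpa [hψ] using this
    rw [this]
    exact hl f
  refine ⟨(z : Y), φ, hφ, fun f => ?_⟩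
  have := hzf (f.comp Z.subtypeL)
  simpa using this

end Aux

/-- If `Y` is a real reflexive Banach space, each `Φ(x, ·)` is sequentially weakly upper
semicontinuous and `-Φ(x₀, ·)` is coercive for some `x₀`, then `y ↦ inf_{x} Φ(x,y)`
attains its supremum over `Y`. -/


theorem inf_functional_attains_sup
    (Y : Type*) [NormedAddCommGroup Y] [NormedSpace ℝ Y] [CompleteSpace Y]
    -- `Y` is reflexive
    (hYrefl : Function.Surjective
      ((NormedSpace.inclusionInDoubleDual ℝ Y) :
        Y → StrongDual ℝ (StrongDual ℝ Y)))
    (X : Type*) [Nonempty X]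
    (Φ : X → Y → ℝ)
    -- each `Φ(x, ·)` is sequentially weakly upper semicontinuous
    (hswusc : ∀ x : X, ∀ (u : ℕ → Y) (y : Y),
      (∀ f : Y →L[ℝ] ℝ, Tendsto (fun n => f (u n)) atTop (𝓝 (f y))) →
      Filter.limsup (fun n => (Φ x (u n) : EReal)) atTop ≤ (Φ x y : EReal))
    -- `-Φ(x₀, ·)` is coercive for some `x₀`
    (x₀ : X)
    (hcoer₀ : Tendsto (fun y : Y => -Φ x₀ y) (comap norm atTop) atTop) :
    ∃ ys : Y, ∀ y : Y, (⨅ x : X, (Φ x y : EReal)) ≤ ⨅ x : X, (Φ x ys : EReal) := by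
  classical
  set g : Y → EReal := fun y => ⨅ x : X, (Φ x y : EReal) with hgdef
  set M : EReal := ⨆ y : Y, g y with hMdef
  have hgM : ∀ y, g y ≤ M := fun y => le_iSup g y
  by_cases hbot : M = ⊥
  · refine ⟨0, fun y => ?_⟩
    have h1 := hgM y
    rw [hbot] at h1
    have h2 : g y = ⊥ := le_bot_iff.1 h1
    calc (⨅ x : X, (Φ x y : EReal)) = g y := rfl
      _ = ⊥ := h2
      _ ≤ _ := bot_le
  · -- maximizing sequence
    have hne : (Set.range g).Nonempty := ⟨g 0, ⟨0, rfl⟩⟩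
    obtain ⟨a, hamono, hatend, hamem⟩ := exists_seq_tendsto_sSup hne (OrderTop.bddAbove _)
    have hMs : sSup (Set.range g) = M := by rw [hMdef, iSup]
    rw [hMs] at hatend
    choose y0 hy0 using fun n => hamem n
    -- a real lower threshold
    obtain ⟨c, -, hcM⟩ := EReal.exists_between_coe_real (Ne.bot_lt hbot)
    obtain ⟨N, hN⟩ := eventually_atTop.1 (hatend.eventually_const_lt hcM)
    set w : ℕ → Y := fun n => y0 (N + n) with hwdef
    have hcw : ∀ n, (c : EReal) < g (w n) := by
      intro n
      rw [hwdef]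
      simp only
      rw [hy0 (N + n)]
      exact hN (N + n) (Nat.le_add_right N n)
    -- coercivity gives a bound
    obtain ⟨t, ht⟩ := eventually_atTop.1 (eventually_comap.1 (hcoer₀.eventually_ge_atTop (-c)))
    have hwb : ∀ n, ‖w n‖ ≤ max t 0 := by
      intro n
      by_contra hcon
      push_neg at hcon
      have htw : t ≤ ‖w n‖ := le_trans (le_max_left _ _) hcon.le
      have h2 : -c ≤ -Φ x₀ (w n) := ht ‖w n‖ htw (w n) rfl
      have h3 : g (w n) ≤ (Φ x₀ (w n) : EReal) := iInf_le _ x₀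
      have h4 : (c : EReal) < (Φ x₀ (w n) : EReal) := lt_of_lt_of_le (hcw n) h3
      rw [EReal.coe_lt_coe_iff] at h4
      linarith
    obtain ⟨z, φ, hφ, hweak⟩ := aux_weak_seq_compact hYrefl w (max t 0)
      (le_max_right _ _) hwb
    refine ⟨z, fun y => ?_⟩
    have hMz : M ≤ g z := by
      rw [hgdef]
      refine le_iInf fun x => ?_
      have hup := hswusc x (fun j => w (φ j)) z hweak
      refine le_trans ?_ hup
      -- M = limsup of g (w (φ j)) ≤ limsup Φ x (w (φ j))
      have htd : Tendsto (fun j => g (w (φ j))) atTop (𝓝 M) := by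
        have h5 : (fun j => g (w (φ j))) = fun j => a (N + φ j) := by
          funext j
          simp only [hwdef]
          rw [hy0 (N + φ j)]
        rw [h5]
        refine hatend.comp ?_
        exact tendsto_atTop_mono (fun j => Nat.le_add_left (φ j) N) hφ.tendsto_atTop
      have hls : limsup (fun j => g (w (φ j))) atTop = M := htd.limsup_eq
      rw [← hls]
      refine limsup_le_limsup (Eventually.of_forall fun j => ?_)
      exact iInf_le _ x
    exact le_trans (hgM y) hMz
end

section
/- Let Y be a real Hilbert space and g : Y → ℝ a C¹ function whose gradient g' : Y → Y is Lipschitz continuous with a Lipschitz constant k < 1. Then the functional v ↦ (1/2)‖v‖² + g(v) is strictly convex and coercive. -/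
open Filter Topology

section aux
variable {Y : Type*} [NormedAddCommGroup Y] [InnerProductSpace ℝ Y] [CompleteSpace Y]
  {g : Y → ℝ}

/-- Derivative of the functional along a line. -/
lemma key_hasDerivAt (hg : Differentiable ℝ g) (w d : Y) (s : ℝ) :
    HasDerivAt (fun s : ℝ => (1 / 2 : ℝ) * ‖w + s • d‖ ^ 2 + g (w + s • d))
      ((inner ℝ (w + s • d) d : ℝ) + (inner ℝ (gradient g (w + s • d)) d : ℝ)) s := by
  have hline : HasDerivAt (fun s : ℝ => w + s • d) d s := by
    simpa using ((hasDerivAt_id s).smul_const d).const_add w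
  have h1 : HasDerivAt (fun s : ℝ => (1 / 2 : ℝ) * (inner ℝ (w + s • d) (w + s • d) : ℝ))
      ((inner ℝ (w + s • d) d : ℝ)) s := by
    have := (hline.inner ℝ hline).const_mul (1 / 2 : ℝ)
    refine this.congr_deriv ?_
    rw [real_inner_comm d (w + s • d)]
    ring
  have hgrad : HasGradientAt g (gradient g (w + s • d)) (w + s • d) :=
    (hg (w + s • d)).hasGradientAt
  have h2 : HasDerivAt (fun s : ℝ => g (w + s • d))
      ((inner ℝ (gradient g (w + s • d)) d : ℝ)) s := by
    have := hgrad.hasFDerivAt.comp_hasDerivAt s hline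
    exact this
  have h3 := h1.add h2
  refine h3.congr_of_eventuallyEq (Filter.Eventually.of_forall fun t => ?_)
  simp only [Pi.add_apply, real_inner_self_eq_norm_sq]

/-- Monotonicity gap for the derivative along a line. -/
lemma deriv_gap {k : NNReal} (hLip : LipschitzWith k (gradient g)) (w d : Y) {s t : ℝ}
    (hst : s ≤ t) :
    (1 - (k : ℝ)) * (t - s) * ‖d‖ ^ 2 ≤
      (((inner ℝ (w + t • d) d : ℝ) + (inner ℝ (gradient g (w + t • d)) d : ℝ)) -
       ((inner ℝ (w + s • d) d : ℝ) + (inner ℝ (gradient g (w + s • d)) d : ℝ))) := by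
  have hdiff : (w + t • d) - (w + s • d) = (t - s) • d := by
    rw [sub_smul]; abel
  have h1 : (inner ℝ (w + t • d) d : ℝ) - (inner ℝ (w + s • d) d : ℝ) = (t - s) * ‖d‖ ^ 2 := by
    rw [← inner_sub_left, hdiff, real_inner_smul_left, real_inner_self_eq_norm_sq]
  have h2 : -((k : ℝ) * (t - s) * ‖d‖ ^ 2) ≤
      (inner ℝ (gradient g (w + t • d)) d : ℝ) - (inner ℝ (gradient g (w + s • d)) d : ℝ) := by
    rw [← inner_sub_left]
    have hb : ‖gradient g (w + t • d) - gradient g (w + s • d)‖ ≤ (k : ℝ) * ((t - s) * ‖d‖) := by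
      have := hLip.dist_le_mul (w + t • d) (w + s • d)
      rw [dist_eq_norm, dist_eq_norm, hdiff, norm_smul] at this
      simpa [abs_of_nonneg (sub_nonneg.2 hst)] using this
    have := neg_le_of_abs_le
      (abs_real_inner_le_norm (gradient g (w + t • d) - gradient g (w + s • d)) d)
    calc -((k : ℝ) * (t - s) * ‖d‖ ^ 2)
        ≤ -(‖gradient g (w + t • d) - gradient g (w + s • d)‖ * ‖d‖) := by
          rw [neg_le_neg_iff]
          calc ‖gradient g (w + t • d) - gradient g (w + s • d)‖ * ‖d‖
              ≤ ((k : ℝ) * ((t - s) * ‖d‖)) * ‖d‖ :=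
                mul_le_mul_of_nonneg_right hb (norm_nonneg d)
            _ = (k : ℝ) * (t - s) * ‖d‖ ^ 2 := by ring
      _ ≤ _ := this
  nlinarith [h1, h2]

end aux

/-- If `g : Y → ℝ` is `C¹` on a real Hilbert space and its gradient is Lipschitz with
constant `k < 1`, then `v ↦ ½‖v‖² + g(v)` is strictly convex and coercive. -/
theorem strictConvex_and_coercive_of_gradient_lipschitz
    (Y : Type*) [NormedAddCommGroup Y] [InnerProductSpace ℝ Y] [CompleteSpace Y]
    (g : Y → ℝ)
    (hC1 : ContDiff ℝ 1 g)
    (k : NNReal) (hk : (k : ℝ) < 1)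
    (hLip : LipschitzWith k (gradient g)) :
    StrictConvexOn ℝ Set.univ (fun v : Y => (1 / 2 : ℝ) * ‖v‖ ^ 2 + g v) ∧
    Tendsto (fun v : Y => (1 / 2 : ℝ) * ‖v‖ ^ 2 + g v) (comap norm atTop) atTop := by
  have hg : Differentiable ℝ g := hC1.differentiable one_ne_zero
  have hk' : (0 : ℝ) < 1 - (k : ℝ) := by linarith
  -- strict convexity of the restriction to any line with direction d ≠ 0
  have hline : ∀ (w d : Y), d ≠ 0 →
      StrictConvexOn ℝ Set.univ
        (fun s : ℝ => (1 / 2 : ℝ) * ‖w + s • d‖ ^ 2 + g (w + s • d)) := by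
    intro w d hd
    apply StrictMono.strictConvexOn_univ_of_deriv
    · have : Differentiable ℝ (fun s : ℝ => (1 / 2 : ℝ) * ‖w + s • d‖ ^ 2 + g (w + s • d)) :=
        fun s => (key_hasDerivAt hg w d s).differentiableAt
      exact this.continuous
    · have hder : deriv (fun s : ℝ => (1 / 2 : ℝ) * ‖w + s • d‖ ^ 2 + g (w + s • d)) =
          fun s => (inner ℝ (w + s • d) d : ℝ) + (inner ℝ (gradient g (w + s • d)) d : ℝ) :=
        funext fun s => (key_hasDerivAt hg w d s).deriv
      rw [hder]
      intro s t hst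
      have hgap := deriv_gap hLip w d hst.le
      have hd2 : (0 : ℝ) < ‖d‖ ^ 2 := pow_pos (norm_pos_iff.2 hd) 2
      have hpos : (0 : ℝ) < (1 - (k : ℝ)) * (t - s) * ‖d‖ ^ 2 :=
        mul_pos (mul_pos hk' (sub_pos.2 hst)) hd2
      dsimp only
      linarith
  constructor
  · -- strict convexity
    refine ⟨convex_univ, ?_⟩
    intro v _ u _ hvu a b ha hb hab
    have hd : v - u ≠ 0 := sub_ne_zero.2 hvu
    have hsc := hline u (v - u) hd
    have h01 : (1 : ℝ) ∈ (Set.univ : Set ℝ) := Set.mem_univ _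
    have := hsc.2 h01 (Set.mem_univ (0 : ℝ)) one_ne_zero ha hb hab
    simp only [smul_eq_mul, mul_one, mul_zero, add_zero] at this
    have hpt : u + a • (v - u) = a • v + b • u := by
      have hb' : b = 1 - a := by linarith
      rw [hb']; module
    simpa [hpt, one_smul, zero_smul, add_zero] using this
  · -- coercivity
    set C := ‖gradient g 0‖ with hC
    have hbound : ∀ v : Y, (1 - (k : ℝ)) / 2 * ‖v‖ ^ 2 - C * ‖v‖ + g 0 ≤
        (1 / 2 : ℝ) * ‖v‖ ^ 2 + g v := by
      intro v
      -- ψ s = f(s•v) - ((1-k)/2 s² ‖v‖² - C‖v‖ s) is monotone on [0,1]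
      set φ : ℝ → ℝ := fun s => (1 / 2 : ℝ) * ‖(0 : Y) + s • v‖ ^ 2 + g ((0 : Y) + s • v)
        with hφ
      set ψ : ℝ → ℝ := fun s =>
        φ s - ((1 - (k : ℝ)) / 2 * s ^ 2 * ‖v‖ ^ 2 - C * ‖v‖ * s) with hψ
      have hψder : ∀ s : ℝ, HasDerivAt ψ
          (((inner ℝ ((0 : Y) + s • v) v : ℝ) + (inner ℝ (gradient g ((0 : Y) + s • v)) v : ℝ)) -
            ((1 - (k : ℝ)) * s * ‖v‖ ^ 2 - C * ‖v‖)) s := by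
        intro s
        have h1 := key_hasDerivAt hg (0 : Y) v s
        have h2 : HasDerivAt (fun s : ℝ => (1 - (k : ℝ)) / 2 * s ^ 2 * ‖v‖ ^ 2 - C * ‖v‖ * s)
            ((1 - (k : ℝ)) * s * ‖v‖ ^ 2 - C * ‖v‖) s := by
          have : HasDerivAt (fun s : ℝ => (1 - (k : ℝ)) / 2 * s ^ 2 * ‖v‖ ^ 2 - C * ‖v‖ * s)
              ((1 - (k : ℝ)) / 2 * (2 * s ^ 1) * ‖v‖ ^ 2 - C * ‖v‖ * 1) s := by
            exact (((hasDerivAt_pow 2 s).const_mul _).mul_const _).sub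
              ((hasDerivAt_id s).const_mul _)
          convert this using 1; ring
        exact h1.sub h2
      have hψnonneg : ∀ s : ℝ, 0 ≤ s →
          0 ≤ ((inner ℝ ((0 : Y) + s • v) v : ℝ) + (inner ℝ (gradient g ((0 : Y) + s • v)) v : ℝ)) -
            ((1 - (k : ℝ)) * s * ‖v‖ ^ 2 - C * ‖v‖) := by
        intro s hs
        have hgap := deriv_gap hLip (0 : Y) v (s := 0) (t := s) hs
        -- value at 0:
        have h0 : (inner ℝ ((0 : Y) + (0 : ℝ) • v) v : ℝ) = 0 := by simp
        have hgr0 : -(C * ‖v‖) ≤ (inner ℝ (gradient g ((0 : Y) + (0 : ℝ) • v)) v : ℝ) := by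
          have := neg_le_of_abs_le (abs_real_inner_le_norm (gradient g ((0 : Y) + (0 : ℝ) • v)) v)
          simpa [hC] using this
        nlinarith [hgap, sq_nonneg (‖v‖)]
      have hmono : MonotoneOn ψ (Set.Icc (0 : ℝ) 1) := by
        apply monotoneOn_of_deriv_nonneg (convex_Icc 0 1)
        · exact (Differentiable.continuous (fun s => (hψder s).differentiableAt)).continuousOn
        · intro s _
          exact (hψder s).differentiableAt.differentiableWithinAt
        · intro s hs
          rw [interior_Icc] at hs
          rw [(hψder s).deriv]
          exact hψnonneg s hs.1.le
      have h01 := hmono (Set.left_mem_Icc.2 zero_le_one) (Set.right_mem_Icc.2 zero_le_one)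
        zero_le_one
      have hψ0 : ψ 0 = g 0 := by simp [hψ, hφ]
      have hψ1 : ψ 1 = ((1 / 2 : ℝ) * ‖v‖ ^ 2 + g v) -
          ((1 - (k : ℝ)) / 2 * ‖v‖ ^ 2 - C * ‖v‖) := by
        simp [hψ, hφ]
      rw [hψ0, hψ1] at h01
      linarith
    apply tendsto_atTop_mono hbound
    have hnorm : Tendsto (fun v : Y => ‖v‖) (comap norm atTop) atTop := tendsto_comap
    have hpoly : Tendsto (fun r : ℝ => (1 - (k : ℝ)) / 2 * r ^ 2 - C * r + g 0) atTop atTop := by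
      apply tendsto_atTop_add_const_right
      have : (fun r : ℝ => (1 - (k : ℝ)) / 2 * r ^ 2 - C * r) =
          fun r : ℝ => r * ((1 - (k : ℝ)) / 2 * r - C) := by funext r; ring
      rw [this]
      exact tendsto_id.atTop_mul_atTop₀
        (tendsto_atTop_add_const_right _ _ ((tendsto_id.const_mul_atTop (by linarith))))
    exact hpoly.comp hnorm
end
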